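/- arXiv:1209.4267 — 3 statements merged into one kernel-verified Lean document; each statement's English description precedes it below -/
import Mathlib

section
/- Let {B_i : i ∈ ℕ} be a partition of ℕ into infinite sets, let A : ℕ → 𝒫(ℕ) be a sequence such that the family ran(A) ∪ {B_i} consists of pairwise almost disjoint infinite sets, and let p ⊆ ℕ be almost disjoint from every element of ran(A) ∪ {B_i}. Then for every u ∈ 2^ℕ there exist finite sets F_i ⊆ B_i for each i such that A(j) ∩ F_i = ∅ whenever i > j, and |(p ∪ F_i) ∩ B_i| is odd if and only if u(i) = 1. -/
/-- Given a partition of ℕ into infinite sets `B i`, a sequence `A` such that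
`ran(A) ∪ {B i}` is a family of pairwise almost disjoint infinite sets, and `p`
almost disjoint from all of them, for every `u ∈ 2^ℕ` there are finite `F i ⊆ B i`
avoiding `A j` for `j < i` whose parity on `B i` together with `p` encodes `u`. -/
theorem stmt2 (B A : ℕ → Set ℕ) (p : Set ℕ)
    (hBinf : ∀ i, (B i).Infinite)
    (hBdisj : ∀ i j, i ≠ j → Disjoint (B i) (B j))
    (hBcover : (⋃ i, B i) = Set.univ)
    (hAinf : ∀ i, (A i).Infinite)
    (hAA : ∀ i j, i ≠ j → (A i ∩ A j).Finite)
    (hAB : ∀ i j, (A i ∩ B j).Finite)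
    (hpA : ∀ i, (p ∩ A i).Finite)
    (hpB : ∀ i, (p ∩ B i).Finite) :
    ∀ u : ℕ → Bool, ∃ F : ℕ → Finset ℕ,
      (∀ i, ↑(F i) ⊆ B i) ∧
      (∀ i j, j < i → A j ∩ ↑(F i) = ∅) ∧
      (∀ i, (Odd ((p ∪ ↑(F i)) ∩ B i).ncard ↔ u i = true)) := by
  classical
  intro u
  have hx : ∀ i, ∃ x, x ∈ B i ∧ x ∉ p ∧ ∀ j, j < i → x ∉ A j := by
    intro i
    set X : Set ℕ := p ∪ ⋃ j ∈ Finset.range i, A j with hX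
    have hfin : (X ∩ B i).Finite := by
      rw [hX, Set.union_inter_distrib_right]
      refine (hpB i).union ?_
      rw [Set.iUnion₂_inter]
      exact Set.Finite.biUnion (Finset.range i).finite_toSet fun j _ => hAB j i
    have hinf : (B i \ X).Infinite := by
      have := (hBinf i).diff hfin
      have heq : B i \ (X ∩ B i) = B i \ X := by
        ext y; simp only [Set.mem_diff, Set.mem_inter_iff]; tauto
      rwa [heq] at this
    obtain ⟨x, hxB, hxX⟩ := hinf.nonempty
    refine ⟨x, hxB, fun hp => hxX (Or.inl hp), fun j hj hA => hxX (Or.inr ?_)⟩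
    exact Set.mem_biUnion (Finset.mem_range.mpr hj) hA
  choose x hxB hxp hxA using hx
  refine ⟨fun i => if (u i = decide (Odd ((p ∩ B i).ncard))) then ∅ else {x i},
    ?_, ?_, ?_⟩
  · intro i y hy
    by_cases h : u i = decide (Odd ((p ∩ B i).ncard)) <;> simp [h] at hy
    · exact hy ▸ hxB i
  · intro i j hj
    beta_reduce
    by_cases h : u i = decide (Odd ((p ∩ B i).ncard))
    · simp [h]
    · rw [if_neg h]
      ext y
      simp only [Finset.coe_singleton, Set.mem_inter_iff, Set.mem_singleton_iff,
        Set.mem_empty_iff_false, iff_false, not_and]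
      rintro hA rfl
      exact hxA i j hj hA
  · intro i
    have hfin : (p ∩ B i).Finite := hpB i
    beta_reduce
    by_cases h : u i = decide (Odd ((p ∩ B i).ncard))
    · rw [if_pos h]
      simp only [Finset.coe_empty, Set.union_empty]
      simp [h]
    · rw [if_neg h]
      simp only [Finset.coe_singleton]
      have heq : (p ∪ {x i}) ∩ B i = insert (x i) (p ∩ B i) := by
        ext y
        constructor
        · rintro ⟨hy | hy, hyB⟩
          · exact Or.inr ⟨hy, hyB⟩
          · exact Or.inl hy
        · rintro (rfl | ⟨hy, hyB⟩)
          · exact ⟨Or.inr rfl, hxB i⟩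
          · exact ⟨Or.inl hy, hyB⟩
      rw [heq, Set.ncard_insert_of_notMem (fun hm => hxp i hm.1) hfin]
      rw [Nat.odd_add_one]
      cases hu : u i <;> simp [hu] at h ⊢ <;> simp [h]
end

section
/- Assuming the continuum hypothesis, there exists an uncountable set H ⊆ ℝ² such that the intersection of H with the range of every continuously differentiable curve γ : ℝ → ℝ² is countable. -/
open MeasureTheory Set

lemma range_null (γ : ℝ → ℝ × ℝ) (hγ : Differentiable ℝ γ) :
    volume (Set.range γ) = 0 := by
  set F : ℝ × ℝ → ℝ × ℝ := fun p => γ p.1 with hF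
  have hrange : Set.range γ = F '' Set.univ := by
    ext p; constructor
    · rintro ⟨t, rfl⟩; exact ⟨(t, 0), trivial, rfl⟩
    · rintro ⟨q, -, rfl⟩; exact ⟨q.1, rfl⟩
  set f' : ℝ × ℝ → (ℝ × ℝ) →L[ℝ] (ℝ × ℝ) :=
    fun p => (fderiv ℝ γ p.1).comp (ContinuousLinearMap.fst ℝ ℝ ℝ) with hf'def
  have hder : ∀ p ∈ Set.univ, HasFDerivWithinAt F (f' p) Set.univ p := by
    intro p _
    exact (((hγ p.1).hasFDerivAt.comp p (hasFDerivAt_fst)).hasFDerivWithinAt)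
  have hdet : ∀ p ∈ Set.univ, (f' p).det = 0 := by
    intro p _
    by_contra hne
    have : Function.Injective (f' p) := by
      have := (LinearMap.equivOfDetNeZero ((f' p) : (ℝ × ℝ) →ₗ[ℝ] (ℝ × ℝ)) hne).injective
      exact this
    have h0 : (f' p) (0, 1) = (f' p) (0, 0) := by
      simp [hf'def]
    have := this h0
    simp at this
  rw [hrange]
  exact addHaar_image_eq_zero_of_det_fderivWithin_eq_zero volume hder hdet

lemma curves_card_le :
    Cardinal.mk {γ : ℝ → ℝ × ℝ // ContDiff ℝ 1 γ} ≤ Cardinal.mk ℝ := by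
  have hinj : Function.Injective
      (fun γ : {γ : ℝ → ℝ × ℝ // ContDiff ℝ 1 γ} => (fun q : ℚ => γ.1 (q : ℝ))) := by
    rintro ⟨γ₁, h₁⟩ ⟨γ₂, h₂⟩ h
    refine Subtype.ext ?_
    refine Continuous.ext_on (Rat.denseRange_cast (𝕜 := ℝ)) h₁.continuous h₂.continuous ?_
    rintro _ ⟨q, rfl⟩
    exact congrFun h q
  calc Cardinal.mk {γ : ℝ → ℝ × ℝ // ContDiff ℝ 1 γ}
      ≤ Cardinal.mk (ℚ → ℝ × ℝ) := Cardinal.mk_le_of_injective hinj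
    _ = Cardinal.mk (ℝ × ℝ) ^ Cardinal.mk ℚ := (Cardinal.power_def _ _).symm
    _ = Cardinal.continuum ^ Cardinal.aleph0 := by
        simp [Cardinal.mk_prod, Cardinal.mk_real, Cardinal.mk_denumerable,
          Cardinal.continuum_mul_self]
    _ = Cardinal.continuum := Cardinal.continuum_power_aleph0
    _ = Cardinal.mk ℝ := Cardinal.mk_real.symm

/-- (CH) There is an uncountable set `H ⊆ ℝ²` meeting the range of every `C¹`
curve in a countable set. -/
theorem stmt9 (hCH : Cardinal.mk ℝ = Cardinal.aleph 1) :
    ∃ H : Set (ℝ × ℝ), ¬ H.Countable ∧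
      ∀ γ : ℝ → ℝ × ℝ, ContDiff ℝ 1 γ → (H ∩ Set.range γ).Countable := by
  classical
  obtain ⟨e⟩ := Cardinal.le_def _ _ |>.1 curves_card_le
  haveI : Nonempty {γ : ℝ → ℝ × ℝ // ContDiff ℝ 1 γ} :=
    ⟨⟨fun _ => (0, 0), contDiff_const⟩⟩
  set f : ℝ → {γ : ℝ → ℝ × ℝ // ContDiff ℝ 1 γ} := Function.invFun e with hfdef
  have hfsurj : Function.Surjective f := Function.invFun_surjective e.injective
  obtain ⟨r, wo, hr⟩ := Cardinal.ord_eq ℝ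
  haveI := wo
  -- every initial segment is countable
  have hseg : ∀ a : ℝ, {b | r b a}.Countable := by
    intro a
    rw [Cardinal.countable_iff_lt_aleph_one, ← hCH]
    have h1 : (Ordinal.typein r a).card < Cardinal.mk ℝ :=
      Cardinal.card_typein_lt (r := r) a hr
    exact (Ordinal.card_typein (r := r) a) ▸ h1
  -- key existence lemma for each step
  have key : ∀ (a : ℝ) (ih : ∀ b, r b a → ℝ × ℝ), ∃ p : ℝ × ℝ,
      (∀ b, (r b a ∨ b = a) → p ∉ Set.range (f b).1) ∧
      (∀ b (h : r b a), p ≠ ih b h) := by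
    intro a ih
    set Bad : Set (ℝ × ℝ) :=
      (⋃ b ∈ ({b | r b a} ∪ {a} : Set ℝ), Set.range (f b).1) ∪
        Set.range (fun b : {b // r b a} => ih b.1 b.2) with hBad
    have hBadnull : MeasureTheory.volume Bad = 0 := by
      apply MeasureTheory.measure_union_null
      · rw [MeasureTheory.measure_biUnion_null_iff ((hseg a).union (Set.countable_singleton a))]
        intro b _
        exact range_null (f b).1 ((f b).2.differentiable one_ne_zero)
      · haveI : Countable {b // r b a} := (hseg a).to_subtype
        exact Set.Countable.measure_zero (Set.countable_range _) _
    have : Badᶜ.Nonempty := by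
      by_contra hc
      rw [Set.not_nonempty_iff_eq_empty, ← Set.compl_univ, compl_inj_iff] at hc
      have h2 : MeasureTheory.volume (Set.univ : Set (ℝ × ℝ)) = 0 := hc ▸ hBadnull
      have h3 : (0 : ENNReal) < MeasureTheory.volume (Set.univ : Set (ℝ × ℝ)) :=
        IsOpen.measure_pos _ isOpen_univ Set.univ_nonempty
      exact h3.ne' h2
    obtain ⟨p, hp⟩ := this
    refine ⟨p, ?_, ?_⟩
    · intro b hb hmem
      exact hp (Set.mem_union_left _ (Set.mem_biUnion (show b ∈ ({b | r b a} ∪ {a} : Set ℝ) by rcases hb with h|h; exact Or.inl h; exact Or.inr (by simpa using h)) hmem))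
    · intro b h hpe
      exact hp (Set.mem_union_right _ ⟨⟨b, h⟩, hpe.symm⟩)
  -- transfinite recursion
  have wf : WellFounded r := wo.toIsWellFounded.wf
  set G : ∀ a : ℝ, (∀ b, r b a → ℝ × ℝ) → ℝ × ℝ :=
    fun a ih => (key a ih).choose with hG
  set x : ℝ → ℝ × ℝ := wf.fix G with hx
  have hxeq : ∀ a, x a = G a (fun b _ => x b) := fun a => wf.fix_eq G a
  have P1 : ∀ a b, (r b a ∨ b = a) → x a ∉ Set.range (f b).1 := by
    intro a b hb
    rw [hxeq a]
    exact (key a _).choose_spec.1 b hb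
  have P2 : ∀ a b, r b a → x a ≠ x b := by
    intro a b hb
    rw [hxeq a]
    exact (key a _).choose_spec.2 b hb
  have hxinj : Function.Injective x := by
    intro a b hab
    by_contra hne
    rcases trichotomous_of r a b with h | h | h
    · exact P2 b a h hab.symm
    · exact hne h
    · exact P2 a b h hab
  refine ⟨Set.range x, ?_, ?_⟩
  · intro hcount
    have h1 : Cardinal.mk (Set.range x) = Cardinal.mk ℝ := Cardinal.mk_range_eq x hxinj
    have h2 : Cardinal.mk (Set.range x) ≤ Cardinal.aleph0 :=
      Cardinal.mk_le_aleph0_iff.2 (Set.countable_coe_iff.2 hcount)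
    rw [h1, hCH] at h2
    exact absurd h2 (not_le.2 Cardinal.aleph0_lt_aleph_one)
  · intro γ hγ
    obtain ⟨a, ha⟩ := hfsurj ⟨γ, hγ⟩
    have hsub : Set.range x ∩ Set.range γ ⊆ x '' {b | r b a} := by
      rintro p ⟨⟨c, rfl⟩, hpγ⟩
      rcases trichotomous_of r a c with h | h | h
      · exact absurd (ha ▸ hpγ) (P1 c a (Or.inl h))
      · exact absurd (ha ▸ hpγ) (P1 c a (Or.inr h))
      · exact ⟨c, h, rfl⟩
    exact Set.Countable.mono hsub ((hseg a).image x)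
end

section
/- Assume CH. There exists a family {A_α : α < ω₁} of countable subsets of Baire space ℕ^ℕ such that: the family is increasing, ⋃_α A_α = ℕ^ℕ, and for every uncountable coanalytic set P ⊆ ℕ^ℕ there is α₀ < ω₁ with |P ∩ (A_{α+1} \ A_α)| ≥ 2 for all α ≥ α₀. Consequently, no set X admitting an enumeration X = {x_α : α < ω₁} with x_α ∉ A_α for all α can be coanalytic. -/
open Cardinal MeasureTheory Set

namespace Stmt11Helper

universe u

noncomputable section

/-- Countability of initial segments below `ω₁`. -/
lemma ctbl_Iio {o : Ordinal.{u}} (h : o < (Cardinal.aleph 1).ord) : (Set.Iio o).Countable := by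
  rw [← Cardinal.le_aleph0_iff_set_countable, Ordinal.mk_Iio_ordinal,
    ← Cardinal.lift_aleph0.{u+1, u}, Cardinal.lift_le]
  have := Cardinal.lt_ord.mp h
  rwa [← Cardinal.succ_aleph0, Order.lt_succ_iff] at this

/-- A countable set of ordinals below `ω₁` is strictly bounded below `ω₁`. -/
lemma bdd_of_countable (s : Set Ordinal.{u}) (hs : s.Countable)
    (h : ∀ α ∈ s, α < (Cardinal.aleph 1).ord) :
    ∃ β < (Cardinal.aleph 1).ord, ∀ α ∈ s, α < β := by
  rcases s.eq_empty_or_nonempty with rfl | hne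
  · exact ⟨0, (Cardinal.isSuccLimit_ord (Cardinal.aleph0_le_aleph 1)).pos, by simp⟩
  · obtain ⟨g, rfl⟩ := hs.exists_eq_range hne
    refine ⟨iSup (fun n => g n + 1), ?_, ?_⟩
    · apply Ordinal.iSup_lt_ord_lift
      · rw [Cardinal.mk_nat, Cardinal.lift_aleph0, Cardinal.isRegular_aleph_one.cof_eq]
        exact Cardinal.aleph0_lt_aleph_one
      · intro n
        rw [Ordinal.add_one_eq_succ]
        exact (Cardinal.isSuccLimit_ord (Cardinal.aleph0_le_aleph 1)).succ_lt
          (h _ (Set.mem_range_self n))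
    · rintro α ⟨n, rfl⟩
      have h1 : g n < g n + 1 := by
        rw [Ordinal.add_one_eq_succ]; exact Order.lt_succ _
      exact lt_of_lt_of_le h1
        (Ordinal.le_iSup (fun n => g n + 1) n)

open scoped Classical in
/-- Pick two distinct points of `P` outside `s`. -/
def pick (P s : Set (ℕ → ℕ)) : (ℕ → ℕ) × (ℕ → ℕ) :=
  if h : ∃ q : (ℕ → ℕ) × (ℕ → ℕ), q.1 ∈ P \ s ∧ q.2 ∈ P \ s ∧ q.1 ≠ q.2 then h.choose
  else ((fun _ => 0), (fun _ => 0))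

lemma pick_spec {P s : Set (ℕ → ℕ)} (hP : ¬ P.Countable) (hs : s.Countable) :
    (pick P s).1 ∈ P \ s ∧ (pick P s).2 ∈ P \ s ∧ (pick P s).1 ≠ (pick P s).2 := by
  rw [pick]
  classical
  split_ifs with h
  · exact h.choose_spec
  · exfalso
    apply hP
    have hsub : (P \ s).Subsingleton := by
      intro v hv w hw
      by_contra hne
      exact h ⟨(v, w), hv, hw, hne⟩
    have : P ⊆ s ∪ (P \ s) := by
      intro v hv
      by_cases hvs : v ∈ s
      · exact Or.inl hvs
      · exact Or.inr ⟨hv, hvs⟩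
    exact Set.Countable.mono this (hs.union hsub.countable)

/-- The increasing family, by transfinite recursion. -/
def Afam (e : Ordinal → (ℕ → ℕ)) (p : Ordinal → Set (ℕ → ℕ)) (α : Ordinal.{u}) :
    Set (ℕ → ℕ) :=
  Ordinal.limitRecOn α ∅
    (fun β IH => (IH ∪ {e β}) ∪
      ⋃ γ ∈ Set.Iio (Order.succ β), {(pick (p γ) IH).1, (pick (p γ) IH).2})
    (fun β _ IH => ⋃ γ, ⋃ h : γ < β, IH γ h)

variable (e : Ordinal.{u} → (ℕ → ℕ)) (p : Ordinal.{u} → Set (ℕ → ℕ))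

lemma Afam_zero : Afam e p 0 = ∅ := by
  rw [Afam, Ordinal.limitRecOn_zero]

lemma Afam_succ (β : Ordinal.{u}) :
    Afam e p (Order.succ β) = (Afam e p β ∪ {e β}) ∪
      ⋃ γ ∈ Set.Iio (Order.succ β),
        {(pick (p γ) (Afam e p β)).1, (pick (p γ) (Afam e p β)).2} := by
  rw [Afam, Ordinal.limitRecOn_succ]
  rfl

lemma Afam_limit {β : Ordinal.{u}} (h : Order.IsSuccLimit β) :
    Afam e p β = ⋃ γ < β, Afam e p γ := by
  rw [Afam, Ordinal.limitRecOn_limit _ _ _ _ h]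
  rfl

lemma Afam_mono : ∀ β : Ordinal.{u}, ∀ α ≤ β, Afam e p α ⊆ Afam e p β := by
  intro β
  induction β using Ordinal.limitRecOn with
  | zero =>
    intro α hα
    rw [nonpos_iff_eq_zero.mp hα]
  | add_one β IH =>
    rw [Ordinal.add_one_eq_succ]
    intro α hα
    rcases eq_or_lt_of_le hα with rfl | hlt
    · exact subset_rfl
    · refine (IH α (Order.lt_succ_iff.mp hlt)).trans ?_
      rw [Afam_succ]
      exact (Set.subset_union_left).trans Set.subset_union_left
  | limit β hβ IH =>
    intro α hα
    rcases eq_or_lt_of_le hα with rfl | hlt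
    · exact subset_rfl
    · rw [Afam_limit e p hβ]
      exact Set.subset_biUnion_of_mem hlt

lemma Afam_ctbl : ∀ β : Ordinal.{u}, β < (Cardinal.aleph 1).ord →
    (Afam e p β).Countable := by
  intro β
  induction β using Ordinal.limitRecOn with
  | zero =>
    intro _
    rw [Afam_zero]
    exact Set.countable_empty
  | add_one β IH =>
    rw [Ordinal.add_one_eq_succ]
    intro h
    have hβ : β < (Cardinal.aleph 1).ord := lt_trans (Order.lt_succ β) h
    rw [Afam_succ]
    refine (((IH hβ).union (Set.countable_singleton _)).union ?_)
    refine Set.Countable.biUnion (ctbl_Iio h) ?_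
    intro γ _
    exact (Set.countable_singleton _).insert _
  | limit β hβ IH =>
    intro h
    rw [Afam_limit e p hβ]
    exact Set.Countable.biUnion (ctbl_Iio h) fun γ hγ => IH γ hγ (lt_trans hγ h)

/-- Under CH, Baire space can be enumerated in order type `ω₁`. -/
lemma exists_enum (hCH : Cardinal.mk (ℕ → ℕ) = Cardinal.aleph 1) :
    ∃ e : Ordinal.{u} → (ℕ → ℕ), ∀ v, ∃ γ < (Cardinal.aleph 1).ord, e γ = v := by
  have hmk : #(ULift.{u} (ℕ → ℕ)) = #(((Cardinal.aleph 1 : Cardinal.{u}).ord).ToType) := by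
    rw [Cardinal.mk_uLift, Cardinal.mk_toType, Cardinal.card_ord, hCH,
      Cardinal.lift_aleph, Ordinal.lift_one]
  obtain ⟨b0⟩ := Cardinal.eq.mp hmk
  set b : ((Cardinal.aleph 1 : Cardinal.{u}).ord).ToType ≃ (ℕ → ℕ) := b0.symm.trans Equiv.ulift with hb
  set iso := Ordinal.ToType.mk (o := (Cardinal.aleph 1 : Cardinal.{u}).ord)
  refine ⟨fun α => if h : α < (Cardinal.aleph 1).ord then b (iso ⟨α, h⟩) else fun _ => 0,
    fun v => ⟨(iso.symm (b.symm v)).1, (iso.symm (b.symm v)).2, ?_⟩⟩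
  dsimp only
  rw [dif_pos (show ((iso.symm (b.symm v)) : Ordinal) < (Cardinal.aleph 1).ord from
    (iso.symm (b.symm v)).2)]
  have : (⟨(iso.symm (b.symm v)).1, (iso.symm (b.symm v)).2⟩ :
      Set.Iio ((Cardinal.aleph 1).ord)) = iso.symm (b.symm v) := rfl
  rw [this, OrderIso.apply_symm_apply, Equiv.apply_symm_apply]

/-- Under CH, the uncountable coanalytic sets can be enumerated in order type `ω₁`. -/
lemma exists_coanalytic_enum (hCH : Cardinal.mk (ℕ → ℕ) = Cardinal.aleph 1) :
    ∃ p : Ordinal.{u} → Set (ℕ → ℕ),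
      (∀ α, AnalyticSet (p α)ᶜ ∧ ¬ (p α).Countable) ∧
      (∀ P : Set (ℕ → ℕ), AnalyticSet Pᶜ → ¬ P.Countable →
        ∃ β < (Cardinal.aleph 1).ord, p β = P) := by
  classical
  -- dense sequence
  obtain ⟨D, hDc, hDd⟩ := TopologicalSpace.exists_countable_dense (ℕ → ℕ)
  obtain ⟨d, hd⟩ := hDc.exists_eq_range (hDd.nonempty)
  have hdense : Dense (Set.range d) := hd ▸ hDd
  -- the type of uncountable coanalytic sets
  set S := {P : Set (ℕ → ℕ) // AnalyticSet Pᶜ ∧ ¬ P.Countable} with hS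
  -- injection into Option (ℕ → ℕ → ℕ)
  set Φ : S → Option (ℕ → ℕ → ℕ) := fun P =>
    if h : ∃ f : (ℕ → ℕ) → (ℕ → ℕ), Continuous f ∧ Set.range f = (P.1)ᶜ then
      some (fun n => h.choose (d n)) else none with hΦ
  have hΦinj : Function.Injective Φ := by
    intro P Q hPQ
    have hcases : ∀ R : S,
        (¬ ∃ f : (ℕ → ℕ) → (ℕ → ℕ), Continuous f ∧ Set.range f = (R.1)ᶜ) → R.1 = Set.univ := by
      intro R hR
      have := R.2.1
      rw [MeasureTheory.AnalyticSet] at this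
      rcases this with h0 | hf
      · exact Set.compl_empty_iff.mp h0
      · exact absurd hf hR
    by_cases hP1 : ∃ f : (ℕ → ℕ) → (ℕ → ℕ), Continuous f ∧ Set.range f = (P.1)ᶜ
    · by_cases hQ1 : ∃ f : (ℕ → ℕ) → (ℕ → ℕ), Continuous f ∧ Set.range f = (Q.1)ᶜ
      · simp only [hΦ, dif_pos hP1, dif_pos hQ1, Option.some.injEq] at hPQ
        have heq : hP1.choose = hQ1.choose := by
          refine Continuous.ext_on hdense hP1.choose_spec.1 hQ1.choose_spec.1 ?_
          rintro v ⟨n, rfl⟩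
          exact congrFun hPQ n
        have : (P.1)ᶜ = (Q.1)ᶜ := by
          rw [← hP1.choose_spec.2, ← hQ1.choose_spec.2, heq]
        exact Subtype.ext (compl_injective this)
      · simp [hΦ, dif_pos hP1, dif_neg hQ1] at hPQ
    · by_cases hQ1 : ∃ f : (ℕ → ℕ) → (ℕ → ℕ), Continuous f ∧ Set.range f = (Q.1)ᶜ
      · simp [hΦ, dif_neg hP1, dif_pos hQ1] at hPQ
      · exact Subtype.ext ((hcases P hP1).trans (hcases Q hQ1).symm)
  -- cardinality computation
  have hcard : #S ≤ Cardinal.aleph 1 := by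
    refine (Cardinal.mk_le_of_injective hΦinj).trans ?_
    have e1 : (ℕ → ℕ → ℕ) ≃ (ℕ → ℕ) :=
      (Equiv.curry ℕ ℕ ℕ).symm.trans
        (Equiv.arrowCongr (Denumerable.eqv (ℕ × ℕ)) (Equiv.refl ℕ))
    rw [Cardinal.mk_option, Cardinal.mk_congr e1, hCH,
      Cardinal.add_one_eq (Cardinal.aleph0_le_aleph 1)]
  have hcard2 : #(ULift.{u} S) ≤ #(((Cardinal.aleph 1 : Cardinal.{u}).ord).ToType) := by
    rw [Cardinal.mk_uLift, Cardinal.mk_toType, Cardinal.card_ord,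
      show (Cardinal.aleph 1 : Cardinal.{u}) = Cardinal.lift.{u} (Cardinal.aleph 1 : Cardinal.{0}) by
        rw [Cardinal.lift_aleph, Ordinal.lift_one]]
    exact Cardinal.lift_le.mpr hcard
  obtain ⟨ψ0⟩ := (Cardinal.le_def _ _).mp hcard2
  set ψ : S ↪ (((Cardinal.aleph 1 : Cardinal.{u})).ord).ToType :=
    (Equiv.ulift.symm.toEmbedding).trans ψ0 with hψ
  set iso := Ordinal.ToType.mk (o := (Cardinal.aleph 1 : Cardinal.{u}).ord)
  refine ⟨fun α =>
    if h : α < (Cardinal.aleph 1).ord then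
      (if h2 : ∃ s : S, ψ s = iso ⟨α, h⟩ then h2.choose.1 else Set.univ)
    else Set.univ, ?_, ?_⟩
  · intro α
    have huniv : AnalyticSet (Set.univ : Set (ℕ → ℕ))ᶜ ∧ ¬ (Set.univ : Set (ℕ → ℕ)).Countable := by
      constructor
      · rw [Set.compl_univ]; exact MeasureTheory.analyticSet_empty
      · intro hc
        have : Countable (ℕ → ℕ) := Set.countable_univ_iff.mp hc
        have h1 : #(ℕ → ℕ) ≤ ℵ₀ := Cardinal.mk_le_aleph0
        rw [hCH] at h1
        exact absurd h1 (not_le.mpr Cardinal.aleph0_lt_aleph_one)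
    dsimp only
    split_ifs with h h2
    · exact h2.choose.2
    · exact huniv
    · exact huniv
  · intro P hPa hPc
    set s : S := ⟨P, hPa, hPc⟩
    refine ⟨(iso.symm (ψ s)).1, (iso.symm (ψ s)).2, ?_⟩
    dsimp only
    rw [dif_pos (show ((iso.symm (ψ s)) : Ordinal) < (Cardinal.aleph 1).ord from
      (iso.symm (ψ s)).2)]
    have hsub : (⟨(iso.symm (ψ s)).1, (iso.symm (ψ s)).2⟩ :
        Set.Iio ((Cardinal.aleph 1).ord)) = iso.symm (ψ s) := rfl
    have h2 : ∃ s' : S, ψ s' = iso ⟨(iso.symm (ψ s)).1, (iso.symm (ψ s)).2⟩ := by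
      refine ⟨s, ?_⟩
      rw [hsub, OrderIso.apply_symm_apply]
    rw [dif_pos h2]
    have : h2.choose = s := by
      apply ψ.injective
      rw [h2.choose_spec, hsub, OrderIso.apply_symm_apply]
    rw [this]

end

end Stmt11Helper

open Stmt11Helper

set_option maxHeartbeats 1000000 in
open Cardinal MeasureTheory in
/-- (CH) There is an increasing family `{A_α : α < ω₁}` of countable subsets of
Baire space covering it, such that every uncountable coanalytic set `P` meets
`A_{α+1} \ A_α` in at least two points for all large `α`; consequently no set
enumerated as `{x_α : α < ω₁}` with `x_α ∉ A_α` is coanalytic. -/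
theorem stmt11 (hCH : Cardinal.mk (ℕ → ℕ) = Cardinal.aleph 1) :
    ∃ A : Ordinal → Set (ℕ → ℕ),
      (∀ α < (Cardinal.aleph 1).ord, (A α).Countable) ∧
      (∀ α β : Ordinal, α ≤ β → β < (Cardinal.aleph 1).ord → A α ⊆ A β) ∧
      (⋃ α ∈ Set.Iio (Cardinal.aleph 1).ord, A α) = Set.univ ∧
      (∀ P : Set (ℕ → ℕ), MeasureTheory.AnalyticSet Pᶜ → ¬ P.Countable →
        ∃ α₀ < (Cardinal.aleph 1).ord, ∀ α : Ordinal, α₀ ≤ α →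
          α < (Cardinal.aleph 1).ord →
          ∃ v ∈ P ∩ (A (α + 1) \ A α), ∃ w ∈ P ∩ (A (α + 1) \ A α), v ≠ w) ∧
      (∀ (x : Ordinal → (ℕ → ℕ)) (X : Set (ℕ → ℕ)),
        X = {v | ∃ α < (Cardinal.aleph 1).ord, v = x α} →
        (∀ α < (Cardinal.aleph 1).ord, x α ∉ A α) →
        ¬ MeasureTheory.AnalyticSet Xᶜ) := by
  classical
  obtain ⟨e, he⟩ := exists_enum hCH
  obtain ⟨p, hp1, hp2⟩ := exists_coanalytic_enum hCH
  set A : Ordinal → Set (ℕ → ℕ) := Afam e p with hAdef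
  have hlim : Order.IsSuccLimit ((Cardinal.aleph 1).ord) :=
    Cardinal.isSuccLimit_ord (Cardinal.aleph0_le_aleph 1)
  -- coverage
  have hcov : ∀ v : ℕ → ℕ, ∃ γ, γ < (Cardinal.aleph 1).ord ∧
      v ∈ A (γ + 1) ∧ γ + 1 < (Cardinal.aleph 1).ord := by
    intro v
    obtain ⟨γ, hγ, rfl⟩ := he v
    refine ⟨γ, hγ, ?_, by rw [Ordinal.add_one_eq_succ]; exact hlim.succ_lt hγ⟩
    rw [hAdef, Ordinal.add_one_eq_succ, Afam_succ]
    exact Or.inl (Or.inr rfl)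
  -- part 4
  have h4 : ∀ P : Set (ℕ → ℕ), MeasureTheory.AnalyticSet Pᶜ → ¬ P.Countable →
      ∃ α₀ < (Cardinal.aleph 1).ord, ∀ α : Ordinal, α₀ ≤ α →
        α < (Cardinal.aleph 1).ord →
        ∃ v ∈ P ∩ (A (α + 1) \ A α), ∃ w ∈ P ∩ (A (α + 1) \ A α), v ≠ w := by
    intro P hPa hPc
    obtain ⟨β, hβ, hpβ⟩ := hp2 P hPa hPc
    refine ⟨β, hβ, fun α hle hα => ?_⟩
    have hps := pick_spec (P := p β) (s := A α) (hp1 β).2 (Afam_ctbl e p α hα)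
    have hβmem : β ∈ Set.Iio (Order.succ α) := Order.lt_succ_iff.mpr hle
    have hq1 : (pick (p β) (A α)).1 ∈ A (α + 1) := by
      rw [hAdef, Ordinal.add_one_eq_succ, Afam_succ]
      exact Or.inr (Set.mem_biUnion hβmem (Set.mem_insert _ _))
    have hq2 : (pick (p β) (A α)).2 ∈ A (α + 1) := by
      rw [hAdef, Ordinal.add_one_eq_succ, Afam_succ]
      exact Or.inr (Set.mem_biUnion hβmem (Set.mem_insert_iff.mpr (Or.inr rfl)))
    exact ⟨(pick (p β) (A α)).1, ⟨hpβ ▸ hps.1.1, hq1, hps.1.2⟩,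
      (pick (p β) (A α)).2, ⟨hpβ ▸ hps.2.1.1, hq2, hps.2.1.2⟩, hps.2.2⟩
  refine ⟨A, fun α hα => Afam_ctbl e p α hα, fun α β hab _ => Afam_mono e p β α hab,
    ?_, h4, ?_⟩
  · -- union is everything
    apply Set.eq_univ_iff_forall.mpr
    intro v
    obtain ⟨γ, _, hv1, hv2⟩ := hcov v
    simp only [Set.mem_iUnion]
    exact ⟨γ + 1, hv2, hv1⟩
  · -- part 5
    intro x X hXdef hx hXa
    have hxX : ∀ γ, γ < (Cardinal.aleph 1).ord → x γ ∈ X := fun γ h => by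
      rw [hXdef]; exact ⟨γ, h, rfl⟩
    have hXidx : ∀ v ∈ X, ∃ γ, γ < (Cardinal.aleph 1).ord ∧ v = x γ := fun v hv => by
      rw [hXdef] at hv; exact hv
    -- X is uncountable
    have hXunc : ¬ X.Countable := by
      intro hXc
      set g : (ℕ → ℕ) → Ordinal := fun v => (hcov v).choose + 1 with hg
      obtain ⟨β, hβ, hbnd⟩ := bdd_of_countable (g '' X) (hXc.image g)
        (by rintro _ ⟨v, _, rfl⟩; exact (hcov v).choose_spec.2.2)
      have h1 : x β ∈ X := hxX β hβ
      have h2 : g (x β) < β := hbnd _ (Set.mem_image_of_mem g h1)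
      have h3 : x β ∈ A β :=
        Afam_mono e p β (g (x β)) h2.le ((hcov (x β)).choose_spec.2.1)
      exact hx β hβ h3
    obtain ⟨α₀, hα₀, hlayer⟩ := h4 X hXa hXunc
    -- index function
    set idx : (ℕ → ℕ) → Ordinal := fun v =>
      if h : ∃ γ, γ < (Cardinal.aleph 1).ord ∧ v = x γ then h.choose else 0 with hidx
    have hidx_spec : ∀ v ∈ X, idx v < (Cardinal.aleph 1).ord ∧ x (idx v) = v := by
      intro v hv
      have hex := hXidx v hv
      simp only [hidx]
      rw [dif_pos hex]
      exact ⟨hex.choose_spec.1, hex.choose_spec.2.symm⟩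
    have hidx_le : ∀ (α : Ordinal) (v), v ∈ X → v ∈ A (α + 1) → idx v ≤ α := by
      intro α v hv hvA
      by_contra hgt
      push_neg at hgt
      have h1 : A (α + 1) ⊆ A (idx v) :=
        Afam_mono e p (idx v) (α + 1) (by rw [Ordinal.add_one_eq_succ]; exact Order.succ_le_of_lt hgt)
      have h2 := hidx_spec v hv
      exact hx (idx v) h2.1 (by rw [h2.2]; exact h1 hvA)
    -- choose two points in each layer
    set vw : Ordinal → ((ℕ → ℕ) × (ℕ → ℕ)) := fun α =>
      if h : ∃ qq : (ℕ → ℕ) × (ℕ → ℕ), qq.1 ∈ X ∩ (A (α + 1) \ A α) ∧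
          qq.2 ∈ X ∩ (A (α + 1) \ A α) ∧ qq.1 ≠ qq.2 then h.choose
      else ((fun _ => 0), (fun _ => 0)) with hvw
    have hvw_spec : ∀ α, α₀ ≤ α → α < (Cardinal.aleph 1).ord →
        (vw α).1 ∈ X ∩ (A (α + 1) \ A α) ∧ (vw α).2 ∈ X ∩ (A (α + 1) \ A α) ∧
          (vw α).1 ≠ (vw α).2 := by
      intro α h1 h2
      obtain ⟨v, hv, w, hw, hne⟩ := hlayer α h1 h2
      have hex : ∃ qq : (ℕ → ℕ) × (ℕ → ℕ), qq.1 ∈ X ∩ (A (α + 1) \ A α) ∧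
          qq.2 ∈ X ∩ (A (α + 1) \ A α) ∧ qq.1 ≠ qq.2 := ⟨(v, w), hv, hw, hne⟩
      simp only [hvw]
      rw [dif_pos hex]
      exact hex.choose_spec
    set f : Ordinal → Ordinal := fun α => min (idx (vw α).1) (idx (vw α).2) with hf
    have hfl : ∀ α, α₀ ≤ α → α < (Cardinal.aleph 1).ord →
        x (f α) ∈ A (α + 1) \ A α ∧ f α < α := by
      intro α h1 h2
      obtain ⟨hv, hw, hne⟩ := hvw_spec α h1 h2
      have hv' := hidx_spec _ hv.1
      have hw' := hidx_spec _ hw.1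
      have hvle : idx (vw α).1 ≤ α := hidx_le α _ hv.1 hv.2.1
      have hwle : idx (vw α).2 ≤ α := hidx_le α _ hw.1 hw.2.1
      have hidxne : idx (vw α).1 ≠ idx (vw α).2 := by
        intro hE
        apply hne
        rw [← hv'.2, ← hw'.2, hE]
      constructor
      · rcases min_cases (idx (vw α).1) (idx (vw α).2) with ⟨hmin, _⟩ | ⟨hmin, _⟩
        · simp only [hf]; rw [hmin, hv'.2]; exact hv.2
        · simp only [hf]; rw [hmin, hw'.2]; exact hw.2
      · simp only [hf]
        rcases lt_or_gt_of_ne hidxne with hlt | hlt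
        · exact lt_of_le_of_lt (min_le_left _ _) (lt_of_lt_of_le hlt hwle)
        · exact lt_of_le_of_lt (min_le_right _ _) (lt_of_lt_of_le hlt hvle)
    have key : ∀ β β', (α₀ ≤ β ∧ β < (Cardinal.aleph 1).ord) →
        (α₀ ≤ β' ∧ β' < (Cardinal.aleph 1).ord) → β < β' → f β ≠ f β' := by
      intro β β' hβ hβ' hlt hEq
      have h1 := (hfl β hβ.1 hβ.2).1
      have h2 := (hfl β' hβ'.1 hβ'.2).1
      have hsubs : A (β + 1) ⊆ A β' :=
        Afam_mono e p β' (β + 1) (by rw [Ordinal.add_one_eq_succ]; exact Order.succ_le_of_lt hlt)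
      exact h2.2 (hsubs (hEq ▸ h1.1))
    have hinj : ∀ α α', (α₀ ≤ α ∧ α < (Cardinal.aleph 1).ord) →
        (α₀ ≤ α' ∧ α' < (Cardinal.aleph 1).ord) → f α = f α' → α = α' := by
      intro α α' h h' hEq
      rcases lt_trichotomy α α' with hlt | heq | hlt
      · exact absurd hEq (key α α' h h' hlt)
      · exact heq
      · exact absurd hEq.symm (key α' α h' h hlt)
    -- bounding function via countable initial preimages
    have hbound : ∀ β, β < (Cardinal.aleph 1).ord →
        ∃ β', β' < (Cardinal.aleph 1).ord ∧
          ∀ α, (α₀ ≤ α ∧ α < (Cardinal.aleph 1).ord) ∧ f α < β → α < β' := by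
      intro β hβ
      have hctbl : {α | (α₀ ≤ α ∧ α < (Cardinal.aleph 1).ord) ∧ f α < β}.Countable := by
        have himg : f '' {α | (α₀ ≤ α ∧ α < (Cardinal.aleph 1).ord) ∧ f α < β} ⊆
            Set.Iio β := by
          rintro _ ⟨α, hα, rfl⟩
          exact hα.2
        exact Set.countable_of_injective_of_countable_image
          (fun a ha b hb hEq => hinj a b ha.1 hb.1 hEq)
          (Set.Countable.mono himg (ctbl_Iio hβ))
      obtain ⟨β', hβ'1, hβ'2⟩ := bdd_of_countable _ hctbl (fun α hα => hα.1.2)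
      exact ⟨β', hβ'1, fun α hα => hβ'2 α hα⟩
    set h : Ordinal → Ordinal := fun β =>
      if hb : ∃ β', β' < (Cardinal.aleph 1).ord ∧
          ∀ α, (α₀ ≤ α ∧ α < (Cardinal.aleph 1).ord) ∧ f α < β → α < β' then hb.choose
      else 0 with hh
    have hh_spec : ∀ β, β < (Cardinal.aleph 1).ord →
        h β < (Cardinal.aleph 1).ord ∧
          ∀ α, (α₀ ≤ α ∧ α < (Cardinal.aleph 1).ord) → f α < β → α < h β := by
      intro β hβ
      have hex := hbound β hβ
      simp only [hh]
      rw [dif_pos hex]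
      exact ⟨hex.choose_spec.1, fun α h1 h2 => hex.choose_spec.2 α ⟨h1, h2⟩⟩
    -- iterate
    set bseq : ℕ → Ordinal := fun n => Nat.rec (α₀ + 1) (fun _ b => max (h b) b + 1) n
      with hbseq
    have hbseq_succ : ∀ n, bseq (n + 1) = max (h (bseq n)) (bseq n) + 1 := fun n => rfl
    have hbseq_lt : ∀ n, bseq n < (Cardinal.aleph 1).ord := by
      intro n
      induction n with
      | zero =>
        show α₀ + 1 < (Cardinal.aleph 1).ord
        rw [Ordinal.add_one_eq_succ]
        exact hlim.succ_lt hα₀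
      | succ n ih =>
        rw [hbseq_succ, Ordinal.add_one_eq_succ]
        exact hlim.succ_lt (max_lt (hh_spec _ ih).1 ih)
    set B : Ordinal := iSup bseq with hB
    have hBlt : B < (Cardinal.aleph 1).ord := by
      rw [hB]
      apply Ordinal.iSup_lt_ord_lift
      · rw [Cardinal.mk_nat, Cardinal.lift_aleph0, Cardinal.isRegular_aleph_one.cof_eq]
        exact Cardinal.aleph0_lt_aleph_one
      · exact hbseq_lt
    have hBge : α₀ ≤ B := by
      have h1 : α₀ < α₀ + 1 := by rw [Ordinal.add_one_eq_succ]; exact Order.lt_succ _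
      have h2 : bseq 0 ≤ B := Ordinal.le_iSup bseq 0
      exact (h1.trans_le h2).le
    have hfB := (hfl B hBge hBlt).2
    obtain ⟨n, hn⟩ := Ordinal.lt_iSup_iff.mp (hB ▸ hfB)
    have hlt1 : B < h (bseq n) := (hh_spec (bseq n) (hbseq_lt n)).2 B ⟨hBge, hBlt⟩ hn
    have hstep : h (bseq n) ≤ max (h (bseq n)) (bseq n) + 1 :=
      le_trans (le_max_left (h (bseq n)) (bseq n))
        (by rw [Ordinal.add_one_eq_succ]; exact (Order.lt_succ _).le)
    have hlt2 : B < bseq (n + 1) := by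
      rw [hbseq_succ]
      exact hlt1.trans_le hstep
    exact absurd (hlt2.trans_le (Ordinal.le_iSup bseq (n + 1))) (lt_irrefl B)
end
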